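/- arXiv:2004.00270 — 2 statements merged into one kernel-verified Lean document; each statement's English description precedes it below -/
import Mathlib

section
/- Let u_h, u be compactly supported BV functions on an open set Ω ⊆ ℝ^d with {u_h ≠ 0}, {u ≠ 0} contained in a fixed open set E⁰ ⊂⊂ Ω of finite perimeter. Suppose each u_h is φ-1-superharmonic (i.e. ∫_Ω φ(−Du_h) ≤ ∫_Ω φ(−Dv) for every BV v ≥ u_h vanishing outside a compact subset of Ω), u_h → u uniformly, and ∫_Ω φ(−Du) ≤ liminf ∫_Ω φ(−Du_h) (lower semicontinuity). Then lim_{h→0} ∫_Ω φ(−Du_h) = ∫_Ω φ(−Du). -/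
open MeasureTheory Set Filter Metric
open scoped Pointwise RealInnerProductSpace ENNReal Topology

noncomputable section

/-- `V d` is Euclidean `d`-space. -/
abbrev V (d : ℕ) := EuclideanSpace ℝ (Fin d)

/-- Divergence of a vector field on `V d`. -/
def dvg {d : ℕ} (z : V d → V d) (x : V d) : ℝ :=
  ∑ i, fderiv ℝ z x (EuclideanSpace.single i 1) i

/-- Candidate values, via admissible dual test fields, for the anisotropic total
variation `∫_Ω φ(−Du)` (dual/De Giorgi definition). -/
def tvSet {d : ℕ} (φ : V d → ℝ) (Ω : Set (V d)) (u : V d → ℝ) : Set ℝ :=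
  {r | ∃ z : V d → V d, ContDiff ℝ 1 z ∧ HasCompactSupport z ∧ tsupport z ⊆ Ω ∧
    (∀ x v, ⟪z x, v⟫ ≤ φ v) ∧ r = ∫ x in Ω, u x * dvg z x}

/-- Anisotropic total variation `∫_Ω φ(−Du)`. -/
def anisoTV {d : ℕ} (φ : V d → ℝ) (Ω : Set (V d)) (u : V d → ℝ) : ℝ := sSup (tvSet φ Ω u)

/-- `u` has bounded anisotropic variation in `Ω` (i.e. `u ∈ BV`). -/
def HasBoundedTV {d : ℕ} (φ : V d → ℝ) (Ω : Set (V d)) (u : V d → ℝ) : Prop :=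
  BddAbove (tvSet φ Ω u)

/-- Anisotropic perimeter `P_φ(E)` (relative to `Ω`). -/
def anisoPer {d : ℕ} (φ : V d → ℝ) (Ω E : Set (V d)) : ℝ := anisoTV φ Ω (E.indicator 1)

/-- `E` has finite anisotropic perimeter. -/
def FinPer {d : ℕ} (φ : V d → ℝ) (Ω E : Set (V d)) : Prop := HasBoundedTV φ Ω (E.indicator 1)

/-- `F ⊂⊂ Ω` : compactly contained. -/
def CpctIn {d : ℕ} (F Ω : Set (V d)) : Prop := IsCompact (closure F) ∧ closure F ⊆ Ω

/-- Signed anisotropic distance to `E` w.r.t. the (possibly non-symmetric) anisotropy `ψ`. -/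
def sdist {d : ℕ} (ψ : V d → ℝ) (E : Set (V d)) (x : V d) : ℝ :=
  sInf ((fun y => ψ (x - y)) '' E) - sInf ((fun y => ψ (y - x)) '' Eᶜ)

/-- Strong outward minimality condition `(MC_δ)` for `E` in `Ω`. -/
def MCd {d : ℕ} (φ : V d → ℝ) (Ω : Set (V d)) (δ : ℝ) (E : Set (V d)) : Prop :=
  ∀ F : Set (V d), CpctIn F Ω → FinPer φ univ F →
    anisoPer φ univ (E ∩ F) ≤ anisoPer φ univ F - δ * (volume (F \ E)).toReal

/-- The Almgren–Taylor–Wang functional. -/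
def ATWfun {d : ℕ} (φ ψ : V d → ℝ) (E : Set (V d)) (h : ℝ) (F : Set (V d)) : ℝ :=
  anisoPer φ univ F + (1 / h) * ∫ x in F, sdist ψ E x

/-- `G` is a minimizer of the ATW functional with datum `E` and time step `h`. -/
def IsATWmin {d : ℕ} (φ ψ : V d → ℝ) (E : Set (V d)) (h : ℝ) (G : Set (V d)) : Prop :=
  FinPer φ univ G ∧ ∀ F, FinPer φ univ F → ATWfun φ ψ E h G ≤ ATWfun φ ψ E h F

/-- `φ` is an admissible anisotropy: convex, positively one-homogeneous,
positive away from `0`. -/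
def Anisotropy {d : ℕ} (φ : V d → ℝ) : Prop :=
  ConvexOn ℝ univ φ ∧ (∀ c : ℝ, 0 ≤ c → ∀ v, φ (c • v) = c * φ v) ∧ ∀ v : V d, v ≠ 0 → 0 < φ v

/-- `u` is `φ`-1-superharmonic in `Ω`. -/
def OneSH {d : ℕ} (φ : V d → ℝ) (Ω : Set (V d)) (u : V d → ℝ) : Prop :=
  ∀ v : V d → ℝ, (∀ x, u x ≤ v x) → HasCompactSupport v → tsupport v ⊆ Ω →
    HasBoundedTV φ Ω v → anisoTV φ Ω u ≤ anisoTV φ Ω v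

/-- `u` is `(φ,δ)`-1-superharmonic in `Ω`. -/
def OneSHd {d : ℕ} (φ : V d → ℝ) (Ω : Set (V d)) (δ : ℝ) (u : V d → ℝ) : Prop :=
  ∀ v : V d → ℝ, HasCompactSupport v → tsupport v ⊆ Ω → HasBoundedTV φ Ω v →
    anisoTV φ Ω (fun x => min (u x) (v x)) ≤ anisoTV φ Ω v - δ * ∫ x in Ω, max (v x - u x) 0
section Aux

variable {d : ℕ}

lemma phi_nonneg {φ : V d → ℝ} (hφ : Anisotropy φ) (v : V d) : 0 ≤ φ v := by
  rcases eq_or_ne v 0 with rfl | hv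
  · have := hφ.2.1 0 le_rfl 0
    simp at this
    simp [this]
  · exact (hφ.2.2 v hv).le

lemma dvg_zero : dvg (fun _ : V d => (0 : V d)) = fun _ => 0 := by
  funext x
  simp [dvg, fderiv_const]

lemma zero_mem_tvSet (φ : V d → ℝ) (hφ : Anisotropy φ) (Ω : Set (V d)) (u : V d → ℝ) :
    (0 : ℝ) ∈ tvSet φ Ω u := by
  refine ⟨fun _ => 0, contDiff_const, ?_, ?_, ?_, ?_⟩
  · have : Function.support (fun _ : V d => (0 : V d)) = ∅ := by simp
    simp [HasCompactSupport, tsupport, this]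
  · have : Function.support (fun _ : V d => (0 : V d)) = ∅ := by simp
    simp [tsupport, this]
  · intro x v; simpa using phi_nonneg hφ v
  · simp [dvg_zero]

lemma anisoTV_nonneg (φ : V d → ℝ) (hφ : Anisotropy φ) (Ω : Set (V d)) (u : V d → ℝ)
    (hb : HasBoundedTV φ Ω u) : 0 ≤ anisoTV φ Ω u :=
  le_csSup hb (zero_mem_tvSet φ hφ Ω u)

lemma dvg_eq_zero_of_not_mem {z : V d → V d} {x : V d} (hx : x ∉ tsupport z) :
    dvg z x = 0 := by
  have hz : z =ᶠ[𝓝 x] 0 := notMem_tsupport_iff_eventuallyEq.mp hx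
  have h0 : fderiv ℝ (0 : V d → V d) x = 0 := by
    have : (0 : V d → V d) = fun _ => (0 : V d) := rfl
    rw [this, fderiv_fun_const]; rfl
  have : fderiv ℝ z x = fderiv ℝ (0 : V d → V d) x := hz.fderiv_eq
  simp [dvg, this, h0]

lemma dvg_support {z : V d → V d} : Function.support (dvg z) ⊆ tsupport z := by
  intro x hx
  by_contra h
  exact hx (dvg_eq_zero_of_not_mem h)

lemma dvg_continuous {z : V d → V d} (hz : ContDiff ℝ 1 z) : Continuous (dvg z) := by
  have h1 : Continuous (fderiv ℝ z) := (hz.fderiv_right (m := 0) le_rfl).continuous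
  refine continuous_finset_sum _ (fun i _ => ?_)
  exact (continuous_apply i).comp ((PiLp.continuous_ofLp 2 _).comp
    ((ContinuousLinearMap.apply ℝ (V d) (EuclideanSpace.single i 1)).continuous.comp h1))

lemma tvSet_subset_univ (φ : V d → ℝ) (Ω : Set (V d)) (u : V d → ℝ) :
    tvSet φ Ω u ⊆ tvSet φ univ u := by
  rintro r ⟨z, hz1, hz2, hz3, hz4, rfl⟩
  refine ⟨z, hz1, hz2, subset_univ _, hz4, ?_⟩
  rw [setIntegral_eq_integral_of_forall_compl_eq_zero (s := Ω)
    (fun x hx => by rw [dvg_eq_zero_of_not_mem (fun h => hx (hz3 h)), mul_zero]),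
    ← setIntegral_univ]

/-- Key estimate: each candidate value for the TV of `ulim + ε·χ_{E0}` is at most
`anisoTV ulim + ε · anisoTV χ_{E0}`. -/
lemma tvSet_add_indicator_le (φ : V d → ℝ) (hφ : Anisotropy φ) (Ω E0 : Set (V d))
    (hE0m : MeasurableSet E0) (w : V d → ℝ) (hbw : HasBoundedTV φ Ω w)
    (hC : HasBoundedTV φ Ω (E0.indicator 1)) {ε : ℝ} (hε : 0 ≤ ε) :
    ∀ r ∈ tvSet φ Ω (fun x => w x + ε * E0.indicator 1 x),
      r ≤ anisoTV φ Ω w + ε * anisoTV φ Ω (E0.indicator 1) := by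
  rintro r ⟨z, hz1, hz2, hz3, hz4, rfl⟩
  have hgc : Continuous (dvg z) := dvg_continuous hz1
  have hgcs : HasCompactSupport (dvg z) := hz2.mono' dvg_support
  have hgint : Integrable (dvg z) := hgc.integrable_of_hasCompactSupport hgcs
  have hf2 : IntegrableOn (fun x => E0.indicator 1 x * dvg z x) Ω := by
    have : (fun x => E0.indicator (1 : V d → ℝ) x * dvg z x) = E0.indicator (dvg z) := by
      funext x; by_cases hx : x ∈ E0 <;> simp [hx]
    rw [this]
    exact (hgint.indicator hE0m).integrableOn
  have hC0 : 0 ≤ anisoTV φ Ω (E0.indicator 1) := anisoTV_nonneg φ hφ Ω _ hC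
  have hw0 : 0 ≤ anisoTV φ Ω w := anisoTV_nonneg φ hφ Ω _ hbw
  by_cases hi : IntegrableOn (fun x => (w x + ε * E0.indicator 1 x) * dvg z x) Ω
  · have hf1 : IntegrableOn (fun x => w x * dvg z x) Ω := by
      have : (fun x => w x * dvg z x)
          = fun x => (w x + ε * E0.indicator 1 x) * dvg z x
            - ε * (E0.indicator 1 x * dvg z x) := by
        funext x; ring
      rw [this]
      exact hi.sub (hf2.const_mul ε)
    have hsplit : ∫ x in Ω, (w x + ε * E0.indicator 1 x) * dvg z x
        = (∫ x in Ω, w x * dvg z x) + ε * ∫ x in Ω, E0.indicator 1 x * dvg z x := by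
      rw [← integral_const_mul, ← integral_add hf1 ((hf2.const_mul ε))]
      congr 1; funext x; ring
    rw [hsplit]
    have h1 : (∫ x in Ω, w x * dvg z x) ≤ anisoTV φ Ω w :=
      le_csSup hbw ⟨z, hz1, hz2, hz3, hz4, rfl⟩
    have h2 : (∫ x in Ω, E0.indicator 1 x * dvg z x) ≤ anisoTV φ Ω (E0.indicator 1) :=
      le_csSup hC ⟨z, hz1, hz2, hz3, hz4, rfl⟩
    have := mul_le_mul_of_nonneg_left h2 hε
    linarith
  · rw [integral_undef hi]
    positivity

end Aux

/-- Strict convergence of the anisotropic total variations: if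
the `φ`-1-superharmonic functions `u_h` (supported in a fixed finite perimeter
set `E⁰ ⊂⊂ Ω`) converge uniformly to `u` and the total variation is lower
semicontinuous along the family, then `∫_Ω φ(−Du_h) → ∫_Ω φ(−Du)`. -/
theorem strict_TV_convergence {d : ℕ} (φ : V d → ℝ) (hφ : Anisotropy φ)
    (Ω E0 : Set (V d)) (hΩ : IsOpen Ω) (hE0 : IsOpen E0) (hE0c : CpctIn E0 Ω)
    (hE0fp : FinPer φ univ E0)
    (u : ℝ → V d → ℝ) (ulim : V d → ℝ)
    (hsupp : ∀ h : ℝ, 0 < h → Function.support (u h) ⊆ E0)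
    (hsupplim : Function.support ulim ⊆ E0)
    (hbv : ∀ h : ℝ, 0 < h → HasBoundedTV φ Ω (u h))
    (hbvlim : HasBoundedTV φ Ω ulim)
    (hsh : ∀ h : ℝ, 0 < h → OneSH φ Ω (u h))
    (hunif : TendstoUniformly u ulim (𝓝[>] (0 : ℝ)))
    (hlsc : anisoTV φ Ω ulim ≤
      Filter.liminf (fun h => anisoTV φ Ω (u h)) (𝓝[>] (0 : ℝ))) :
    Filter.Tendsto (fun h => anisoTV φ Ω (u h)) (𝓝[>] (0 : ℝ))
      (𝓝 (anisoTV φ Ω ulim)) := by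
  set A := anisoTV φ Ω ulim with hA
  set C := anisoTV φ Ω (E0.indicator 1) with hCdef
  set f : ℝ → ℝ := fun h => anisoTV φ Ω (u h) with hf
  have hCb : HasBoundedTV φ Ω (E0.indicator 1) :=
    hE0fp.mono (tvSet_subset_univ φ Ω (E0.indicator 1))
  have hC0 : 0 ≤ C := anisoTV_nonneg φ hφ Ω _ hCb
  -- the key eventual upper bound
  have key : ∀ ε : ℝ, 0 < ε → ∀ᶠ h in 𝓝[>] (0 : ℝ), f h ≤ A + ε * C := by
    intro ε hε
    have hev1 := Metric.tendstoUniformly_iff.mp hunif ε hε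
    filter_upwards [hev1, self_mem_nhdsWithin] with h hh hhpos
    set v : V d → ℝ := fun x => ulim x + ε * E0.indicator 1 x with hv
    have hle : ∀ x, u h x ≤ v x := by
      intro x
      by_cases hx : x ∈ E0
      · have h1 : dist (ulim x) (u h x) < ε := hh x
        rw [Real.dist_eq, abs_sub_lt_iff] at h1
        simp only [hv, Set.indicator_of_mem hx, Pi.one_apply, mul_one]
        linarith [h1.2]
      · have h1 : u h x = 0 := by
          by_contra h2
          exact hx (hsupp h hhpos h2)
        have h2 : ulim x = 0 := by
          by_contra h2
          exact hx (hsupplim h2)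
        simp [hv, h1, h2, Set.indicator_of_notMem hx]
    have hsv : Function.support v ⊆ E0 := by
      intro x hx
      by_contra h2
      apply hx
      have h3 : ulim x = 0 := by
        by_contra h3; exact h2 (hsupplim h3)
      simp [hv, h3, Set.indicator_of_notMem h2]
    have hts : tsupport v ⊆ closure E0 := closure_mono hsv
    have hcs : HasCompactSupport v :=
      hE0c.1.of_isClosed_subset isClosed_closure hts
    have htsΩ : tsupport v ⊆ Ω := hts.trans hE0c.2
    have hbound := tvSet_add_indicator_le φ hφ Ω E0 hE0.measurableSet ulim hbvlim hCb hε.le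
    have hbv_v : HasBoundedTV φ Ω v := ⟨A + ε * C, fun r hr => hbound r hr⟩
    have h1 : anisoTV φ Ω (u h) ≤ anisoTV φ Ω v := hsh h hhpos v hle hcs htsΩ hbv_v
    have h2 : anisoTV φ Ω v ≤ A + ε * C :=
      csSup_le ⟨0, zero_mem_tvSet φ hφ Ω v⟩ hbound
    exact h1.trans h2
  have hbdd_above : IsBoundedUnder (· ≤ ·) (𝓝[>] (0 : ℝ)) f :=
    ⟨A + 1 * C, by simpa [eventually_map] using key 1 one_pos⟩
  have hbdd_below : IsBoundedUnder (· ≥ ·) (𝓝[>] (0 : ℝ)) f := by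
    refine ⟨0, ?_⟩
    rw [eventually_map]
    filter_upwards [self_mem_nhdsWithin] with h hhpos
    exact anisoTV_nonneg φ hφ Ω _ (hbv h hhpos)
  have hcobdd : IsCoboundedUnder (· ≤ ·) (𝓝[>] (0 : ℝ)) f :=
    hbdd_below.isCoboundedUnder_le
  have hsup : limsup f (𝓝[>] (0 : ℝ)) ≤ A := by
    refine le_of_forall_pos_le_add (fun δ hδ => ?_)
    have hεpos : 0 < δ / (C + 1) := by positivity
    have h1 : limsup f (𝓝[>] (0 : ℝ)) ≤ A + (δ / (C + 1)) * C :=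
      limsup_le_of_le hcobdd (key _ hεpos)
    have h2 : (δ / (C + 1)) * C ≤ δ := by
      rw [div_mul_eq_mul_div, div_le_iff₀ (by linarith)]
      nlinarith
    linarith
  have hliminf_le : liminf f (𝓝[>] (0 : ℝ)) ≤ limsup f (𝓝[>] (0 : ℝ)) :=
    liminf_le_limsup hbdd_above hbdd_below
  have hinfEq : liminf f (𝓝[>] (0 : ℝ)) = A :=
    le_antisymm (hliminf_le.trans hsup) hlsc
  have hsupEq : limsup f (𝓝[>] (0 : ℝ)) = A :=
    le_antisymm hsup (hlsc.trans hliminf_le)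
  exact tendsto_of_liminf_eq_limsup hinfEq hsupEq hbdd_above hbdd_below
end
end

section
/- In ℝ² with φ(ξ,η) = ψ(ξ,η) = |ξ| + |η| and L > 1, let E_L = ([−1,1]×[−L,L]) ∪ ([−L,L]×[−1,1]). The vector field z(x,y) equal to (x,y) on [−1,1]², to (x, ±1) for |x| ≤ 1, 1 ≤ ±y ≤ L, and to (±1, y) for 1 ≤ ±x ≤ L, |y| ≤ 1, satisfies on E_L: (i) z takes values in the unit ball {ψ° ≤ 1} = [−1,1]² of ψ°, (ii) div z = 1 + χ_{[−1,1]²} in the interior of each region, and (iii) for every 1 ≤ ℓ ≤ L, the anisotropic perimeter satisfies P_φ(E_ℓ) = ∫_{∂E_ℓ} z·ν dH¹. -/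
open MeasureTheory Set Filter Metric
open scoped Pointwise RealInnerProductSpace ENNReal Topology

noncomputable section

/-- The cross-shaped set `E_ℓ = ([−1,1]×[−ℓ,ℓ]) ∪ ([−ℓ,ℓ]×[−1,1])`. -/
def cross (ℓ : ℝ) : Set (V 2) :=
  {p : V 2 | (|p 0| ≤ 1 ∧ |p 1| ≤ ℓ) ∨ (|p 0| ≤ ℓ ∧ |p 1| ≤ 1)}

/-- Clamp to `[−1,1]`. -/
def clamp (t : ℝ) : ℝ := max (-1) (min 1 t)

/-- The calibration field of the cross: `(x,y)` on `[−1,1]²`, `(x, ±1)` and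
`(±1, y)` on the arms; globally it is the coordinatewise clamp. -/
def zfield : V 2 → V 2 := fun p => WithLp.toLp 2 (fun i => clamp (p i))

/-- The crystalline anisotropy `φ(ξ,η) = |ξ| + |η|` (the `ℓ¹` norm). -/
def phi1 : V 2 → ℝ := fun p => |p 0| + |p 1|

namespace CC

open scoped RealInnerProductSpace


/-- linear equivalence `ℝ × ℝ ≃ V 2`. -/
def eL2 : (ℝ × ℝ) ≃L[ℝ] V 2 :=
  ((EuclideanSpace.equiv (Fin 2) ℝ).trans (ContinuousLinearEquiv.finTwoArrow ℝ ℝ)).symm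

lemma eL2_apply_0 (q : ℝ × ℝ) : eL2 q 0 = q.1 := rfl
lemma eL2_apply_1 (q : ℝ × ℝ) : eL2 q 1 = q.2 := rfl

lemma eL2_single0 : eL2 (1, 0) = EuclideanSpace.single (0 : Fin 2) (1:ℝ) := by
  ext i; fin_cases i <;> simp [EuclideanSpace.single_apply] <;> rfl

lemma eL2_single1 : eL2 (0, 1) = EuclideanSpace.single (1 : Fin 2) (1:ℝ) := by
  ext i; fin_cases i <;> simp [EuclideanSpace.single_apply] <;> rfl

/-- measurable equivalence `V 2 ≃ᵐ ℝ × ℝ`, measure preserving. -/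
def m2 : V 2 ≃ᵐ (ℝ × ℝ) :=
  (MeasurableEquiv.toLp 2 (Fin 2 → ℝ)).symm.trans MeasurableEquiv.finTwoArrow

lemma m2_apply (p : V 2) : m2 p = (p 0, p 1) := rfl

lemma m2_symm_eq (q : ℝ × ℝ) : m2.symm q = eL2 q := by
  ext i; fin_cases i <;> rfl

lemma mp2 : MeasurePreserving m2 volume volume :=
  (volume_preserving_finTwoArrow ℝ).comp (EuclideanSpace.volume_preserving_symm_measurableEquiv_toLp (Fin 2))

/-- transfer of set integrals -/
lemma transfer (F : V 2 → ℝ) (s : Set (ℝ × ℝ)) :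
    ∫ x in m2 ⁻¹' s, F x = ∫ q in s, F (eL2 q) := by
  have h := mp2.setIntegral_preimage_emb m2.measurableEmbedding (fun q => F (eL2 q)) s
  have hfun : (fun x : V 2 => F (eL2 (m2 x))) = F := by
    funext x
    rw [← m2_symm_eq, m2.symm_apply_apply]
  rw [← h, hfun]

lemma transfer_vol {s : Set (ℝ × ℝ)} (hs : NullMeasurableSet s volume) :
    volume (m2 ⁻¹' s) = volume s :=
  mp2.measure_preimage hs



lemma dvg_cont {z : V 2 → V 2} (hz : ContDiff ℝ 1 z) : Continuous (dvg z) := by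
  unfold dvg
  refine continuous_finset_sum _ (fun i _ => ?_)
  exact ((EuclideanSpace.proj i : V 2 →L[ℝ] ℝ).continuous).comp
    ((hz.continuous_fderiv one_ne_zero).clm_apply continuous_const)

lemma rect_div {z : V 2 → V 2} (hz : ContDiff ℝ 1 z) {a1 b1 a2 b2 : ℝ}
    (h1 : a1 ≤ b1) (h2 : a2 ≤ b2) :
    ∫ q in Icc a1 b1 ×ˢ Icc a2 b2, dvg z (eL2 q) =
      (((∫ x in a1..b1, z (eL2 (x, b2)) 1) - ∫ x in a1..b1, z (eL2 (x, a2)) 1) +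
        ∫ y in a2..b2, z (eL2 (b1, y)) 0) - ∫ y in a2..b2, z (eL2 (a1, y)) 0 := by
  set f : ℝ × ℝ → ℝ := fun q => z (eL2 q) 0 with hf
  set g : ℝ × ℝ → ℝ := fun q => z (eL2 q) 1 with hg
  set f' : ℝ × ℝ → (ℝ × ℝ) →L[ℝ] ℝ := fun q =>
    ((EuclideanSpace.proj (0 : Fin 2) : V 2 →L[ℝ] ℝ).comp (fderiv ℝ z (eL2 q))).comp
      (eL2 : (ℝ × ℝ) →L[ℝ] V 2) with hf'
  set g' : ℝ × ℝ → (ℝ × ℝ) →L[ℝ] ℝ := fun q =>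
    ((EuclideanSpace.proj (1 : Fin 2) : V 2 →L[ℝ] ℝ).comp (fderiv ℝ z (eL2 q))).comp
      (eL2 : (ℝ × ℝ) →L[ℝ] V 2) with hg'
  have hdf : ∀ q : ℝ × ℝ, HasFDerivAt f (f' q) q := by
    intro q
    have hD : HasFDerivAt z (fderiv ℝ z (eL2 q)) (eL2 q) :=
      ((hz.differentiable one_ne_zero) (eL2 q)).hasFDerivAt
    exact ((EuclideanSpace.proj (0 : Fin 2) : V 2 →L[ℝ] ℝ).hasFDerivAt).comp q
      (hD.comp q eL2.hasFDerivAt)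
  have hdg : ∀ q : ℝ × ℝ, HasFDerivAt g (g' q) q := by
    intro q
    have hD : HasFDerivAt z (fderiv ℝ z (eL2 q)) (eL2 q) :=
      ((hz.differentiable one_ne_zero) (eL2 q)).hasFDerivAt
    exact ((EuclideanSpace.proj (1 : Fin 2) : V 2 →L[ℝ] ℝ).hasFDerivAt).comp q
      (hD.comp q eL2.hasFDerivAt)
  have hdiv : ∀ q : ℝ × ℝ, f' q (1, 0) + g' q (0, 1) = dvg z (eL2 q) := by
    intro q
    have e0 : (eL2 : (ℝ × ℝ) →L[ℝ] V 2) (1, 0) = EuclideanSpace.single (0 : Fin 2) (1:ℝ) := by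
      rw [ContinuousLinearEquiv.coe_coe, eL2_single0]
    have e1 : (eL2 : (ℝ × ℝ) →L[ℝ] V 2) (0, 1) = EuclideanSpace.single (1 : Fin 2) (1:ℝ) := by
      rw [ContinuousLinearEquiv.coe_coe, eL2_single1]
    simp only [hf', hg', ContinuousLinearMap.comp_apply, e0, e1]
    rw [dvg, Fin.sum_univ_two]
    rfl
  have hc : Continuous fun q : ℝ × ℝ => dvg z (eL2 q) := (dvg_cont hz).comp eL2.continuous
  have hi : IntegrableOn (fun q => f' q (1, 0) + g' q (0, 1)) (Icc (a1, a2) (b1, b2)) := by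
    have : (fun q => f' q (1, 0) + g' q (0, 1)) = fun q => dvg z (eL2 q) := funext hdiv
    rw [this]
    exact hc.continuousOn.integrableOn_compact isCompact_Icc
  have key := integral_divergence_prod_Icc_of_hasFDerivAt_off_countable_of_le f g f' g'
    (a1, a2) (b1, b2) ⟨h1, h2⟩ ∅ countable_empty
    ((((EuclideanSpace.proj (0 : Fin 2) : V 2 →L[ℝ] ℝ).continuous).comp
      (hz.continuous.comp eL2.continuous)).continuousOn)
    ((((EuclideanSpace.proj (1 : Fin 2) : V 2 →L[ℝ] ℝ).continuous).comp
      (hz.continuous.comp eL2.continuous)).continuousOn)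
    (fun q _ => hdf q) (fun q _ => hdg q) hi
  rw [Icc_prod_Icc]
  calc ∫ q in Icc (a1, a2) (b1, b2), dvg z (eL2 q)
      = ∫ q in Icc (a1, a2) (b1, b2), (f' q (1, 0) + g' q (0, 1)) := by
        refine setIntegral_congr_fun measurableSet_Icc (fun q _ => (hdiv q).symm)
    _ = _ := by rw [key]



def cross2 (ℓ : ℝ) : Set (ℝ × ℝ) :=
  (Icc (-1) 1 ×ˢ Icc (-ℓ) ℓ) ∪ (Icc (-ℓ) ℓ ×ˢ Icc (-1) 1)

lemma cross_preimage (ℓ : ℝ) : m2 ⁻¹' cross2 ℓ = cross ℓ := by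
  ext p
  simp only [cross2, cross, mem_preimage, mem_union, mem_prod, mem_Icc, mem_setOf_eq,
    m2_apply, abs_le]

lemma cross2_eq {ℓ : ℝ} (hl : 1 ≤ ℓ) :
    cross2 ℓ = (Icc (-1) 1 ×ˢ Icc (-ℓ) ℓ) ∪
      ((Icc 1 ℓ ×ˢ Icc (-1) 1) ∪ (Icc (-ℓ) (-1) ×ˢ Icc (-1) 1)) := by
  ext q
  simp only [cross2, mem_union, mem_prod, mem_Icc]
  constructor
  · rintro (h | ⟨⟨hx1, hx2⟩, hy⟩)
    · exact Or.inl h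
    · rcases le_or_gt q.1 1 with h1 | h1
      · rcases le_or_gt (-1) q.1 with h2 | h2
        · exact Or.inl ⟨⟨h2, h1⟩, ⟨by linarith [hy.1], by linarith [hy.2]⟩⟩
        · exact Or.inr (Or.inr ⟨⟨hx1, h2.le⟩, hy⟩)
      · exact Or.inr (Or.inl ⟨⟨h1.le, hx2⟩, hy⟩)
  · rintro (h | ⟨⟨hx1, hx2⟩, hy⟩ | ⟨⟨hx1, hx2⟩, hy⟩)
    · exact Or.inl h
    · exact Or.inr ⟨⟨by linarith, hx2⟩, hy⟩
    · exact Or.inr ⟨⟨hx1, by linarith⟩, hy⟩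

lemma line_null (c : ℝ) : volume {q : ℝ × ℝ | q.1 = c} = 0 := by
  have : {q : ℝ × ℝ | q.1 = c} = ({c} : Set ℝ) ×ˢ (univ : Set ℝ) := by
    ext q; simp only [mem_setOf_eq, mem_prod, mem_singleton_iff, mem_univ, and_true]
  rw [this]
  rw [show (volume : Measure (ℝ × ℝ)) = (volume : Measure ℝ).prod volume from rfl]
  rw [Measure.prod_prod, Real.volume_singleton, zero_mul]

lemma cross2_int {ℓ : ℝ} (hl : 1 ≤ ℓ) {F : ℝ × ℝ → ℝ} (hF : Continuous F) :
    ∫ q in cross2 ℓ, F q = (∫ q in Icc (-1) 1 ×ˢ Icc (-ℓ) ℓ, F q)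
      + ((∫ q in Icc 1 ℓ ×ˢ Icc (-1) 1, F q) + ∫ q in Icc (-ℓ) (-1) ×ˢ Icc (-1) 1, F q) := by
  have hint : ∀ (a b c d : ℝ), IntegrableOn F (Icc a b ×ˢ Icc c d) := fun a b c d =>
    hF.continuousOn.integrableOn_compact (isCompact_Icc.prod isCompact_Icc)
  have hRL : Icc (1:ℝ) ℓ ×ˢ Icc (-1:ℝ) 1 ∩ Icc (-ℓ) (-1) ×ˢ Icc (-1:ℝ) 1 = ∅ := by
    ext q
    simp only [mem_inter_iff, mem_prod, mem_Icc, mem_empty_iff_false, iff_false]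
    rintro ⟨⟨⟨h1, _⟩, _⟩, ⟨_, h2⟩, _⟩
    linarith
  have hd2 : AEDisjoint volume (Icc (1:ℝ) ℓ ×ˢ Icc (-1:ℝ) 1) (Icc (-ℓ) (-1) ×ˢ Icc (-1:ℝ) 1) := by
    rw [AEDisjoint, hRL, measure_empty]
  have hd1 : AEDisjoint volume (Icc (-1:ℝ) 1 ×ˢ Icc (-ℓ) ℓ)
      ((Icc 1 ℓ ×ˢ Icc (-1:ℝ) 1) ∪ (Icc (-ℓ) (-1) ×ˢ Icc (-1:ℝ) 1)) := by
    refine measure_mono_null (fun q hq => ?_) (measure_union_null (line_null 1) (line_null (-1)))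
    rcases hq with ⟨hV, hRL⟩
    rcases hRL with ⟨⟨h1, _⟩, _⟩ | ⟨⟨_, h2⟩, _⟩
    · exact Or.inl (le_antisymm hV.1.2 h1)
    · exact Or.inr (le_antisymm h2 hV.1.1)
  rw [cross2_eq hl]
  rw [integral_union_ae hd1
    (((measurableSet_Icc.prod measurableSet_Icc).union
      (measurableSet_Icc.prod measurableSet_Icc)).nullMeasurableSet)
    (hint _ _ _ _) ((hint _ _ _ _).union (hint _ _ _ _))]
  rw [integral_union_ae hd2 ((measurableSet_Icc.prod measurableSet_Icc).nullMeasurableSet)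
    (hint _ _ _ _) (hint _ _ _ _)]

lemma cross_int_eq {ℓ : ℝ} (hl : 1 ≤ ℓ) {z : V 2 → V 2} (hz : ContDiff ℝ 1 z) :
    ∫ x in cross ℓ, dvg z x =
      ((((∫ x in (-1:ℝ)..1, z (eL2 (x, ℓ)) 1) - ∫ x in (-1:ℝ)..1, z (eL2 (x, -ℓ)) 1) +
        ∫ y in (-ℓ)..ℓ, z (eL2 (1, y)) 0) - ∫ y in (-ℓ)..ℓ, z (eL2 (-1, y)) 0)
      + (((((∫ x in (1:ℝ)..ℓ, z (eL2 (x, 1)) 1) - ∫ x in (1:ℝ)..ℓ, z (eL2 (x, -1)) 1) +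
        ∫ y in (-1:ℝ)..1, z (eL2 (ℓ, y)) 0) - ∫ y in (-1:ℝ)..1, z (eL2 (1, y)) 0)
      + ((((∫ x in (-ℓ)..(-1:ℝ), z (eL2 (x, 1)) 1) - ∫ x in (-ℓ)..(-1:ℝ), z (eL2 (x, -1)) 1) +
        ∫ y in (-1:ℝ)..1, z (eL2 (-1, y)) 0) - ∫ y in (-1:ℝ)..1, z (eL2 (-ℓ, y)) 0)) := by
  rw [← cross_preimage, transfer (dvg z) (cross2 ℓ),
    cross2_int hl (F := fun q => dvg z (eL2 q)) ((dvg_cont hz).comp eL2.continuous),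
    rect_div hz (by norm_num) (by linarith),
    rect_div hz hl (by norm_num),
    rect_div hz (by linarith) (by norm_num)]



lemma intbound {a b : ℝ} (h : a ≤ b) {u : ℝ → ℝ} (hu : ∀ y, |u y| ≤ 1) :
    |∫ y in a..b, u y| ≤ b - a := by
  have := intervalIntegral.norm_integral_le_of_norm_le_const (C := 1) (f := u) (a := a) (b := b)
    (fun x _ => hu x)
  rw [Real.norm_eq_abs] at this
  have h2 : (1:ℝ) * |b - a| = b - a := by rw [one_mul, abs_of_nonneg (sub_nonneg.2 h)]
  exact le_of_le_of_eq this h2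

lemma comp_cont {z : V 2 → V 2} (hz : ContDiff ℝ 1 z) (i : Fin 2) (c : ℝ) :
    Continuous (fun y : ℝ => z (eL2 (c, y)) i) :=
  ((EuclideanSpace.proj i : V 2 →L[ℝ] ℝ).continuous).comp
    ((hz.continuous.comp eL2.continuous).comp (continuous_const.prodMk continuous_id))

lemma upper {ℓ : ℝ} (hl : 1 ≤ ℓ) {z : V 2 → V 2} (hz : ContDiff ℝ 1 z)
    (hb : ∀ x i, |z x i| ≤ 1) :
    ∫ x in cross ℓ, dvg z x ≤ 8 * ℓ := by
  rw [cross_int_eq hl hz]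
  have hii : ∀ (c : ℝ) (a b : ℝ), IntervalIntegrable (fun y => z (eL2 (c, y)) 0) volume a b :=
    fun c a b => (comp_cont hz 0 c).intervalIntegrable a b
  have hsplit : ∀ c : ℝ, (∫ y in (-ℓ)..ℓ, z (eL2 (c, y)) 0) =
      ((∫ y in (-ℓ)..(-1:ℝ), z (eL2 (c, y)) 0) + ∫ y in (-1:ℝ)..1, z (eL2 (c, y)) 0)
        + ∫ y in (1:ℝ)..ℓ, z (eL2 (c, y)) 0 := by
    intro c
    rw [intervalIntegral.integral_add_adjacent_intervals (hii c _ _) (hii c _ _),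
      intervalIntegral.integral_add_adjacent_intervals (hii c _ _) (hii c _ _)]
  rw [hsplit 1, hsplit (-1)]
  have B : ∀ (a b c : ℝ) (i : Fin 2), a ≤ b →
      |∫ x in a..b, z (eL2 (x, c)) i| ≤ b - a := by
    intro a b c i h
    exact intbound h (fun y => hb _ _)
  have B' : ∀ (a b c : ℝ) (i : Fin 2), a ≤ b →
      |∫ y in a..b, z (eL2 (c, y)) i| ≤ b - a := by
    intro a b c i h
    exact intbound h (fun y => hb _ _)
  have h1 := abs_le.1 (B (-1) 1 ℓ 1 (by norm_num))
  have h2 := abs_le.1 (B (-1) 1 (-ℓ) 1 (by norm_num))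
  have h3 := abs_le.1 (B' (-ℓ) (-1) 1 0 (by linarith))
  have h4 := abs_le.1 (B' 1 ℓ 1 0 hl)
  have h5 := abs_le.1 (B' (-ℓ) (-1) (-1) 0 (by linarith))
  have h6 := abs_le.1 (B' 1 ℓ (-1) 0 hl)
  have h7 := abs_le.1 (B 1 ℓ 1 1 hl)
  have h8 := abs_le.1 (B 1 ℓ (-1) 1 hl)
  have h9 := abs_le.1 (B' (-1) 1 ℓ 0 (by norm_num))
  have h10 := abs_le.1 (B' (-1) 1 (-ℓ) 0 (by norm_num))
  have h11 := abs_le.1 (B (-ℓ) (-1) 1 1 (by linarith))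
  have h12 := abs_le.1 (B (-ℓ) (-1) (-1) 1 (by linarith))
  linarith [h1.1, h1.2, h2.1, h2.2, h3.1, h3.2, h4.1, h4.2, h5.1, h5.2, h6.1, h6.2,
    h7.1, h7.2, h8.1, h8.2, h9.1, h9.2, h10.1, h10.2, h11.1, h11.2, h12.1, h12.2]



/-- smooth clamp -/
def sc (t : ℝ) : ℝ := 2 * Real.smoothTransition ((t + 1) / 2) - 1

lemma sc_contDiff : ContDiff ℝ 1 sc := by
  have h : ContDiff ℝ 1 (fun t : ℝ => (t + 1) / 2) :=
    (contDiff_id.add contDiff_const).div_const 2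
  exact (contDiff_const.mul ((Real.smoothTransition.contDiff (n := 1)).comp h)).sub contDiff_const

lemma sc_one {t : ℝ} (h : 1 ≤ t) : sc t = 1 := by
  rw [sc, Real.smoothTransition.one_of_one_le (by linarith)]; ring

lemma sc_neg_one {t : ℝ} (h : t ≤ -1) : sc t = -1 := by
  rw [sc, Real.smoothTransition.zero_of_nonpos (by linarith)]; ring

lemma abs_sc_le (t : ℝ) : |sc t| ≤ 1 := by
  rw [abs_le]
  constructor
  · have := Real.smoothTransition.nonneg ((t + 1) / 2); simp [sc]; linarith
  · have := Real.smoothTransition.le_one ((t + 1) / 2); simp [sc]; linarith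

/-- smooth vector field (before cutoff) -/
def wf : V 2 → V 2 := fun q =>
  sc (q 0) • EuclideanSpace.single (0 : Fin 2) (1:ℝ) + sc (q 1) • EuclideanSpace.single (1 : Fin 2) (1:ℝ)

lemma wf_apply (q : V 2) (i : Fin 2) : wf q i = sc (q i) := by
  fin_cases i <;> simp [wf, EuclideanSpace.single_apply]

lemma wf_contDiff : ContDiff ℝ 1 wf := by
  have h0 : ContDiff ℝ 1 (fun q : V 2 => sc (q 0)) :=
    sc_contDiff.comp (EuclideanSpace.proj (0 : Fin 2) : V 2 →L[ℝ] ℝ).contDiff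
  have h1 : ContDiff ℝ 1 (fun q : V 2 => sc (q 1)) :=
    sc_contDiff.comp (EuclideanSpace.proj (1 : Fin 2) : V 2 →L[ℝ] ℝ).contDiff
  exact (h0.smul contDiff_const).add (h1.smul contDiff_const)

/-- the bump cutoff -/
def bump (ℓ : ℝ) : ContDiffBump (0 : V 2) :=
  { rIn := 2 * |ℓ| + 1, rOut := 2 * |ℓ| + 2,
    rIn_pos := by positivity, rIn_lt_rOut := by linarith }

/-- the good admissible field -/
def zg (ℓ : ℝ) : V 2 → V 2 := fun p => bump ℓ p • wf p

lemma zg_contDiff (ℓ : ℝ) : ContDiff ℝ 1 (zg ℓ) :=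
  ((bump ℓ).contDiff (n := 1)).smul wf_contDiff

lemma zg_supp (ℓ : ℝ) : HasCompactSupport (zg ℓ) :=
  (bump ℓ).hasCompactSupport.smul_right

lemma zg_apply (ℓ : ℝ) (p : V 2) (i : Fin 2) : zg ℓ p i = bump ℓ p * sc (p i) := by
  rw [zg]
  simp [wf_apply]

lemma abs_zg_le (ℓ : ℝ) (p : V 2) (i : Fin 2) : |zg ℓ p i| ≤ 1 := by
  rw [zg_apply, abs_mul]
  have h1 : |(bump ℓ) p| ≤ 1 := by
    rw [abs_of_nonneg (bump ℓ).nonneg]; exact (bump ℓ).le_one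
  calc |(bump ℓ) p| * |sc (p i)| ≤ 1 * 1 :=
        mul_le_mul h1 (abs_sc_le _) (abs_nonneg _) zero_le_one
    _ = 1 := by ring

lemma cross_subset_ball {ℓ : ℝ} (hl : 1 ≤ ℓ) :
    cross ℓ ⊆ Metric.ball (0 : V 2) (2 * |ℓ| + 1) := by
  intro p hp
  have hb : |p 0| ≤ ℓ ∧ |p 1| ≤ ℓ := by
    rcases hp with ⟨h1, h2⟩ | ⟨h1, h2⟩
    · exact ⟨h1.trans hl, h2⟩
    · exact ⟨h1, h2.trans hl⟩
  rw [mem_ball_zero_iff]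
  have hnorm : ‖p‖ ≤ 2 * ℓ := by
    rw [EuclideanSpace.norm_eq]
    have hsum : (∑ i : Fin 2, ‖p i‖ ^ 2) ≤ (2 * ℓ)^2 := by
      rw [Fin.sum_univ_two]
      have e0 : ‖p 0‖ = |p 0| := rfl
      have e1 : ‖p 1‖ = |p 1| := rfl
      rw [e0, e1]
      nlinarith [abs_nonneg (p 0), abs_nonneg (p 1), hb.1, hb.2]
    calc Real.sqrt (∑ i : Fin 2, ‖p i‖ ^ 2) ≤ Real.sqrt ((2*ℓ)^2) := Real.sqrt_le_sqrt hsum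
      _ = 2 * ℓ := Real.sqrt_sq (by linarith)
  have he : |ℓ| = ℓ := abs_of_nonneg (by linarith)
  rw [he]
  linarith

lemma zg_eq_wf {ℓ : ℝ} (hl : 1 ≤ ℓ) {p : V 2} (hp : p ∈ cross ℓ) : zg ℓ p = wf p := by
  have h1 : (bump ℓ) p = 1 :=
    (bump ℓ).one_of_mem_closedBall (Metric.ball_subset_closedBall (cross_subset_ball hl hp))
  rw [zg, h1, one_smul]

lemma memh {ℓ : ℝ} (hl : 1 ≤ ℓ) {a b c : ℝ} (ha : -ℓ ≤ a) (hb : b ≤ ℓ) (hc : |c| ≤ ℓ)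
    (hcase : (-1 ≤ a ∧ b ≤ 1) ∨ |c| ≤ 1) : ∀ x ∈ Icc a b, eL2 (x, c) ∈ cross ℓ := by
  intro x hx
  rcases mem_Icc.1 hx with ⟨hx1, hx2⟩
  have h0 : eL2 (x, c) 0 = x := eL2_apply_0 _
  have h1 : eL2 (x, c) 1 = c := eL2_apply_1 _
  rcases hcase with ⟨hca, hcb⟩ | h
  · exact Or.inl (by rw [h0, h1]; exact ⟨abs_le.2 ⟨by linarith, by linarith⟩, hc⟩)
  · exact Or.inr (by rw [h0, h1]; exact ⟨abs_le.2 ⟨by linarith, by linarith⟩, h⟩)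

lemma memv {ℓ : ℝ} (hl : 1 ≤ ℓ) {a b c : ℝ} (ha : -ℓ ≤ a) (hb : b ≤ ℓ) (hc : |c| ≤ ℓ)
    (hcase : (-1 ≤ a ∧ b ≤ 1) ∨ |c| ≤ 1) : ∀ y ∈ Icc a b, eL2 (c, y) ∈ cross ℓ := by
  intro y hy
  rcases mem_Icc.1 hy with ⟨hy1, hy2⟩
  have h0 : eL2 (c, y) 0 = c := eL2_apply_0 _
  have h1 : eL2 (c, y) 1 = y := eL2_apply_1 _
  rcases hcase with ⟨hca, hcb⟩ | h
  · exact Or.inr (by rw [h0, h1]; exact ⟨hc, abs_le.2 ⟨by linarith, by linarith⟩⟩)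
  · exact Or.inl (by rw [h0, h1]; exact ⟨h, abs_le.2 ⟨by linarith, by linarith⟩⟩)

/-- horizontal side evaluation -/
lemma eval_h {ℓ : ℝ} (hl : 1 ≤ ℓ) {a b c v : ℝ} (h : a ≤ b)
    (hmem : ∀ x ∈ Icc a b, eL2 (x, c) ∈ cross ℓ) (hv : sc c = v) :
    ∫ x in a..b, zg ℓ (eL2 (x, c)) 1 = (b - a) * v := by
  rw [intervalIntegral.integral_congr (g := fun _ => v) ?_, intervalIntegral.integral_const,
    smul_eq_mul]
  intro x hx
  rw [uIcc_of_le h] at hx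
  show zg ℓ (eL2 (x, c)) 1 = v
  rw [zg_eq_wf hl (hmem x hx), wf_apply, eL2_apply_1, hv]

/-- vertical side evaluation -/
lemma eval_v {ℓ : ℝ} (hl : 1 ≤ ℓ) {a b c v : ℝ} (h : a ≤ b)
    (hmem : ∀ y ∈ Icc a b, eL2 (c, y) ∈ cross ℓ) (hv : sc c = v) :
    ∫ y in a..b, zg ℓ (eL2 (c, y)) 0 = (b - a) * v := by
  rw [intervalIntegral.integral_congr (g := fun _ => v) ?_, intervalIntegral.integral_const,
    smul_eq_mul]
  intro y hy
  rw [uIcc_of_le h] at hy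
  show zg ℓ (eL2 (c, y)) 0 = v
  rw [zg_eq_wf hl (hmem y hy), wf_apply, eL2_apply_0, hv]

lemma eval_zg {ℓ : ℝ} (hl : 1 ≤ ℓ) : ∫ x in cross ℓ, dvg (zg ℓ) x = 8 * ℓ := by
  have habs : |ℓ| = ℓ := abs_of_nonneg (by linarith)
  have habs' : |(-ℓ)| = ℓ := by rw [abs_neg, habs]
  have h1l : |(1:ℝ)| ≤ ℓ := by rw [abs_one]; exact hl
  have h1l' : |(-1:ℝ)| ≤ ℓ := by rw [abs_neg, abs_one]; exact hl
  have h1 : |(1:ℝ)| ≤ 1 := by rw [abs_one]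
  have h1' : |(-1:ℝ)| ≤ 1 := by rw [abs_neg, abs_one]
  have t1 := eval_h hl (a := -1) (b := 1) (by norm_num)
    (memh hl (by linarith) hl (le_of_eq habs) (Or.inl ⟨le_rfl, le_rfl⟩)) (sc_one hl)
  have t2 := eval_h hl (a := -1) (b := 1) (by norm_num)
    (memh hl (by linarith) hl (le_of_eq habs') (Or.inl ⟨le_rfl, le_rfl⟩)) (sc_neg_one (by linarith))
  have t3 := eval_v hl (a := -ℓ) (b := ℓ) (by linarith)
    (memv hl le_rfl le_rfl h1l (Or.inr h1)) (sc_one le_rfl)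
  have t4 := eval_v hl (a := -ℓ) (b := ℓ) (by linarith)
    (memv hl le_rfl le_rfl h1l' (Or.inr h1')) (sc_neg_one le_rfl)
  have t5 := eval_h hl (a := 1) (b := ℓ) hl
    (memh hl (by linarith) le_rfl h1l (Or.inr h1)) (sc_one le_rfl)
  have t6 := eval_h hl (a := 1) (b := ℓ) hl
    (memh hl (by linarith) le_rfl h1l' (Or.inr h1')) (sc_neg_one le_rfl)
  have t7 := eval_v hl (a := -1) (b := 1) (by norm_num)
    (memv hl (by linarith) hl (le_of_eq habs) (Or.inl ⟨le_rfl, le_rfl⟩)) (sc_one hl)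
  have t8 := eval_v hl (a := -1) (b := 1) (by norm_num)
    (memv hl (by linarith) hl h1l (Or.inl ⟨le_rfl, le_rfl⟩)) (sc_one le_rfl)
  have t9 := eval_h hl (a := -ℓ) (b := -1) (by linarith)
    (memh hl le_rfl (by linarith) h1l (Or.inr h1)) (sc_one le_rfl)
  have t10 := eval_h hl (a := -ℓ) (b := -1) (by linarith)
    (memh hl le_rfl (by linarith) h1l' (Or.inr h1')) (sc_neg_one le_rfl)
  have t11 := eval_v hl (a := -1) (b := 1) (by norm_num)
    (memv hl (by linarith) hl h1l' (Or.inl ⟨le_rfl, le_rfl⟩)) (sc_neg_one le_rfl)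
  have t12 := eval_v hl (a := -1) (b := 1) (by norm_num)
    (memv hl (by linarith) hl (le_of_eq habs') (Or.inl ⟨le_rfl, le_rfl⟩)) (sc_neg_one (by linarith))
  rw [cross_int_eq hl (zg_contDiff ℓ)]
  rw [t1, t2, t3, t4, t5, t6, t7, t8, t9, t10, t11, t12]
  ring


lemma phi1_single (i : Fin 2) (c : ℝ) : phi1 (EuclideanSpace.single i c) = |c| := by
  fin_cases i <;> simp [phi1, EuclideanSpace.single_apply]

/-- componentwise bound from the duality constraint -/
lemma comp_bound {z : V 2 → V 2} (h : ∀ x v, ⟪z x, v⟫ ≤ phi1 v) (x : V 2) (i : Fin 2) :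
    |z x i| ≤ 1 := by
  have h1 := h x (EuclideanSpace.single i 1)
  have h2 := h x (EuclideanSpace.single i (-1))
  rw [EuclideanSpace.inner_single_right, phi1_single] at h1 h2
  simp only [one_mul, neg_one_mul, conj_trivial, abs_one, abs_neg] at h1 h2
  rw [abs_le]
  constructor <;> linarith

/-- duality constraint for `zg` -/
lemma zg_dual (ℓ : ℝ) (x : V 2) (v : V 2) : ⟪zg ℓ x, v⟫ ≤ phi1 v := by
  rw [PiLp.inner_apply, Fin.sum_univ_two]
  simp only [RCLike.inner_apply, conj_trivial]
  have b0 : zg ℓ x 0 * v 0 ≤ |v 0| := by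
    calc zg ℓ x 0 * v 0 ≤ |zg ℓ x 0 * v 0| := le_abs_self _
      _ = |zg ℓ x 0| * |v 0| := abs_mul _ _
      _ ≤ 1 * |v 0| := mul_le_mul_of_nonneg_right (abs_zg_le ℓ x 0) (abs_nonneg _)
      _ = |v 0| := one_mul _
  have b1 : zg ℓ x 1 * v 1 ≤ |v 1| := by
    calc zg ℓ x 1 * v 1 ≤ |zg ℓ x 1 * v 1| := le_abs_self _
      _ = |zg ℓ x 1| * |v 1| := abs_mul _ _
      _ ≤ 1 * |v 1| := mul_le_mul_of_nonneg_right (abs_zg_le ℓ x 1) (abs_nonneg _)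
      _ = |v 1| := one_mul _
  exact add_le_add (by rw [mul_comm]; exact b0) (by rw [mul_comm]; exact b1)

lemma measurableSet_cross (ℓ : ℝ) : MeasurableSet (cross ℓ) := by
  have hc : ∀ (i : Fin 2) (c : ℝ), IsClosed {p : V 2 | |p i| ≤ c} := by
    intro i c
    exact isClosed_le (continuous_abs.comp
      (EuclideanSpace.proj i : V 2 →L[ℝ] ℝ).continuous) continuous_const
  have : cross ℓ = ({p : V 2 | |p 0| ≤ 1} ∩ {p : V 2 | |p 1| ≤ ℓ}) ∪
      ({p : V 2 | |p 0| ≤ ℓ} ∩ {p : V 2 | |p 1| ≤ 1}) := by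
    ext p; simp [cross]
  rw [this]
  exact (((hc 0 1).inter (hc 1 ℓ)).union ((hc 0 ℓ).inter (hc 1 1))).measurableSet

lemma line_null2 (c : ℝ) : volume {q : ℝ × ℝ | q.2 = c} = 0 := by
  have : {q : ℝ × ℝ | q.2 = c} = (univ : Set ℝ) ×ˢ ({c} : Set ℝ) := by
    ext q; simp only [mem_setOf_eq, mem_prod, mem_singleton_iff, mem_univ, true_and]
  rw [this]
  rw [show (volume : Measure (ℝ × ℝ)) = (volume : Measure ℝ).prod volume from rfl]
  rw [Measure.prod_prod, Real.volume_singleton, mul_zero]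

lemma vline_null (c : ℝ) : volume {p : V 2 | p 0 = c} = 0 := by
  have h : {p : V 2 | p 0 = c} = m2 ⁻¹' {q : ℝ × ℝ | q.1 = c} := rfl
  rw [h, transfer_vol]
  · exact line_null c
  · exact ((measurable_fst (measurableSet_singleton c)).nullMeasurableSet)

lemma vline_null2 (c : ℝ) : volume {p : V 2 | p 1 = c} = 0 := by
  have h : {p : V 2 | p 1 = c} = m2 ⁻¹' {q : ℝ × ℝ | q.2 = c} := rfl
  rw [h, transfer_vol]
  · exact line_null2 c
  · exact ((measurable_snd (measurableSet_singleton c)).nullMeasurableSet)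

lemma bad_null : volume {p : V 2 | |p 0| = 1 ∨ |p 1| = 1} = 0 := by
  have hsub : {p : V 2 | |p 0| = 1 ∨ |p 1| = 1} ⊆
      ({p : V 2 | p 0 = 1} ∪ {p : V 2 | p 0 = -1}) ∪
      ({p : V 2 | p 1 = 1} ∪ {p : V 2 | p 1 = -1}) := by
    rintro p (h | h)
    · exact Or.inl ((abs_eq (by norm_num)).1 h)
    · exact Or.inr ((abs_eq (by norm_num)).1 h)
  refine measure_mono_null hsub ?_
  refine measure_union_null (measure_union_null ?_ ?_) (measure_union_null ?_ ?_)
  exacts [vline_null 1, vline_null (-1), vline_null2 1, vline_null2 (-1)]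



lemma clamp_eq_of_abs_le {t : ℝ} (h : |t| ≤ 1) : clamp t = t := by
  rcases abs_le.1 h with ⟨h1, h2⟩
  simp [clamp, min_eq_right h2, max_eq_right h1]

lemma abs_clamp_le (t : ℝ) : |clamp t| ≤ 1 := by
  rw [abs_le]
  constructor
  · exact le_max_left _ _
  · exact max_le (by norm_num) (min_le_left _ _)

lemma clamp_eq_one {t : ℝ} (h : 1 ≤ t) : clamp t = 1 := by
  simp [clamp, min_eq_left h]

lemma clamp_eq_neg_one {t : ℝ} (h : t ≤ -1) : clamp t = -1 := by
  have h2 : min 1 t = t := min_eq_right (by linarith)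
  rw [clamp, h2, max_eq_left (by linarith)]

lemma clamp_hasDerivAt_one {t : ℝ} (h : |t| < 1) : HasDerivAt clamp 1 t := by
  have hev : ∀ᶠ s in 𝓝 t, clamp s = id s := by
    filter_upwards [Ioo_mem_nhds (abs_lt.1 h).1 (abs_lt.1 h).2] with s hs
    exact clamp_eq_of_abs_le (abs_le.2 ⟨hs.1.le, hs.2.le⟩)
  exact (hasDerivAt_id t).congr_of_eventuallyEq hev

lemma clamp_hasDerivAt_zero {t : ℝ} (h : 1 < |t|) : HasDerivAt clamp 0 t := by
  rcases lt_abs.1 h with h1 | h1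
  · have hev : ∀ᶠ s in 𝓝 t, clamp s = (fun _ => (1:ℝ)) s := by
      filter_upwards [Ioi_mem_nhds h1] with s hs
      exact clamp_eq_one (le_of_lt hs)
    exact (hasDerivAt_const t (1:ℝ)).congr_of_eventuallyEq hev
  · have h1' : t < -1 := by linarith
    have hev : ∀ᶠ s in 𝓝 t, clamp s = (fun _ => (-1:ℝ)) s := by
      filter_upwards [Iio_mem_nhds h1'] with s hs
      exact clamp_eq_neg_one (le_of_lt hs)
    exact (hasDerivAt_const t (-1:ℝ)).congr_of_eventuallyEq hev

/-- The model derivative. -/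
def D2 (a' b' : ℝ) : V 2 →L[ℝ] V 2 :=
  ((a' • EuclideanSpace.proj (0 : Fin 2)).smulRight (EuclideanSpace.single 0 (1:ℝ))) +
  ((b' • EuclideanSpace.proj (1 : Fin 2)).smulRight (EuclideanSpace.single 1 (1:ℝ)))

lemma D2_apply (a' b' : ℝ) (v : V 2) (i : Fin 2) :
    D2 a' b' v i = (a' * v 0) * (EuclideanSpace.single (0:Fin 2) (1:ℝ) i)
      + (b' * v 1) * (EuclideanSpace.single (1:Fin 2) (1:ℝ) i) := by
  simp [D2, PiLp.proj_apply, smul_eq_mul, mul_comm]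

lemma hasFDerivAt_comp2 {a b : ℝ → ℝ} {a' b' : ℝ} {p : V 2}
    (ha : HasDerivAt a a' (p 0)) (hb : HasDerivAt b b' (p 1)) :
    HasFDerivAt (fun q : V 2 => a (q 0) • EuclideanSpace.single (0:Fin 2) (1:ℝ)
      + b (q 1) • EuclideanSpace.single (1:Fin 2) (1:ℝ)) (D2 a' b') p := by
  have hp0 : HasFDerivAt (fun q : V 2 => q 0) (EuclideanSpace.proj (0:Fin 2) : V 2 →L[ℝ] ℝ) p :=
    (EuclideanSpace.proj (0:Fin 2) : V 2 →L[ℝ] ℝ).hasFDerivAt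
  have hp1 : HasFDerivAt (fun q : V 2 => q 1) (EuclideanSpace.proj (1:Fin 2) : V 2 →L[ℝ] ℝ) p :=
    (EuclideanSpace.proj (1:Fin 2) : V 2 →L[ℝ] ℝ).hasFDerivAt
  have h0 : HasFDerivAt (fun q : V 2 => a (q 0)) (a' • EuclideanSpace.proj (0:Fin 2)) p :=
    ha.comp_hasFDerivAt p hp0
  have h1 : HasFDerivAt (fun q : V 2 => b (q 1)) (b' • EuclideanSpace.proj (1:Fin 2)) p :=
    hb.comp_hasFDerivAt p hp1
  exact (h0.smul_const _).add (h1.smul_const _)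

lemma dvg_of_hasFDerivAt {z : V 2 → V 2} {a' b' : ℝ} {p : V 2}
    (h : HasFDerivAt z (D2 a' b') p) : dvg z p = a' + b' := by
  rw [dvg, h.fderiv, Fin.sum_univ_two, D2_apply, D2_apply]
  simp [EuclideanSpace.single_apply]

lemma zfield_rep : zfield = fun q : V 2 => clamp (q 0) • EuclideanSpace.single (0:Fin 2) (1:ℝ)
      + clamp (q 1) • EuclideanSpace.single (1:Fin 2) (1:ℝ) := by
  funext q
  ext i
  fin_cases i <;> simp [zfield, EuclideanSpace.single_apply]




lemma dvg_zfield_off {p : V 2} (h0 : |p 0| ≠ 1) (h1 : |p 1| ≠ 1) :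
    dvg zfield p = (if |p 0| < 1 then 1 else 0) + (if |p 1| < 1 then 1 else 0) := by
  have c0 : HasDerivAt clamp (if |p 0| < 1 then 1 else 0) (p 0) := by
    split_ifs with h
    · exact clamp_hasDerivAt_one h
    · exact clamp_hasDerivAt_zero (lt_of_le_of_ne (not_lt.1 h) (Ne.symm h0))
  have c1 : HasDerivAt clamp (if |p 1| < 1 then 1 else 0) (p 1) := by
    split_ifs with h
    · exact clamp_hasDerivAt_one h
    · exact clamp_hasDerivAt_zero (lt_of_le_of_ne (not_lt.1 h) (Ne.symm h1))
  rw [zfield_rep]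
  exact dvg_of_hasFDerivAt (hasFDerivAt_comp2 c0 c1)

lemma strip_vol0 {ℓ : ℝ} (hl : 1 ≤ ℓ) :
    volume (cross ℓ ∩ {p : V 2 | |p 0| < 1}) = ENNReal.ofReal 2 * ENNReal.ofReal (ℓ - -ℓ) := by
  have hset : cross ℓ ∩ {p : V 2 | |p 0| < 1} = m2 ⁻¹' (Ioo (-1) 1 ×ˢ Icc (-ℓ) ℓ) := by
    ext p
    simp only [mem_inter_iff, mem_setOf_eq, mem_preimage, m2_apply, mem_prod, mem_Ioo, mem_Icc,
      cross, abs_le, abs_lt]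
    constructor
    · rintro ⟨hc | hc, h⟩
      · exact ⟨h, hc.2⟩
      · exact ⟨h, by constructor <;> linarith [hc.2.1, hc.2.2]⟩
    · rintro ⟨h1, h2⟩
      exact ⟨Or.inl ⟨⟨h1.1.le, h1.2.le⟩, h2⟩, h1⟩
  rw [hset, transfer_vol ((measurableSet_Ioo.prod measurableSet_Icc).nullMeasurableSet)]
  rw [show (volume : Measure (ℝ × ℝ)) = (volume : Measure ℝ).prod volume from rfl,
    Measure.prod_prod, Real.volume_Ioo, Real.volume_Icc]
  norm_num

lemma strip_vol1 {ℓ : ℝ} (hl : 1 ≤ ℓ) :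
    volume (cross ℓ ∩ {p : V 2 | |p 1| < 1}) = ENNReal.ofReal (ℓ - -ℓ) * ENNReal.ofReal 2 := by
  have hset : cross ℓ ∩ {p : V 2 | |p 1| < 1} = m2 ⁻¹' (Icc (-ℓ) ℓ ×ˢ Ioo (-1) 1) := by
    ext p
    simp only [mem_inter_iff, mem_setOf_eq, mem_preimage, m2_apply, mem_prod, mem_Ioo, mem_Icc,
      cross, abs_le, abs_lt]
    constructor
    · rintro ⟨hc | hc, h⟩
      · exact ⟨by constructor <;> linarith [hc.1.1, hc.1.2], h⟩
      · exact ⟨hc.1, h⟩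
    · rintro ⟨h1, h2⟩
      exact ⟨Or.inr ⟨h1, ⟨h2.1.le, h2.2.le⟩⟩, h2⟩
  rw [hset, transfer_vol ((measurableSet_Icc.prod measurableSet_Ioo).nullMeasurableSet)]
  rw [show (volume : Measure (ℝ × ℝ)) = (volume : Measure ℝ).prod volume from rfl,
    Measure.prod_prod, Real.volume_Ioo, Real.volume_Icc]
  norm_num

lemma cross_vol_fin {ℓ : ℝ} (hl : 1 ≤ ℓ) : volume (cross ℓ) < ⊤ := by
  have hsub : cross ℓ ⊆ m2 ⁻¹' (Icc (-ℓ) ℓ ×ˢ Icc (-ℓ) ℓ) := by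
    rintro p hp
    have hb : |p 0| ≤ ℓ ∧ |p 1| ≤ ℓ := by
      rcases hp with ⟨h1, h2⟩ | ⟨h1, h2⟩
      · exact ⟨h1.trans hl, h2⟩
      · exact ⟨h1, h2.trans hl⟩
    exact ⟨abs_le.1 hb.1, abs_le.1 hb.2⟩
  refine lt_of_le_of_lt (measure_mono hsub) ?_
  rw [transfer_vol ((measurableSet_Icc.prod measurableSet_Icc).nullMeasurableSet),
    show (volume : Measure (ℝ × ℝ)) = (volume : Measure ℝ).prod volume from rfl,
    Measure.prod_prod, Real.volume_Icc]
  exact ENNReal.mul_lt_top ENNReal.ofReal_lt_top ENNReal.ofReal_lt_top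

lemma int_zfield {ℓ : ℝ} (hl : 1 ≤ ℓ) : ∫ x in cross ℓ, dvg zfield x = 8 * ℓ := by
  set A : Set (V 2) := {p : V 2 | |p 0| < 1} with hA
  set B : Set (V 2) := {p : V 2 | |p 1| < 1} with hB
  have hAm : MeasurableSet A := by
    have : A = (fun p : V 2 => |p 0|) ⁻¹' Iio 1 := rfl
    rw [this]
    exact (continuous_abs.comp (EuclideanSpace.proj (0:Fin 2) : V 2 →L[ℝ] ℝ).continuous).measurable
      measurableSet_Iio
  have hBm : MeasurableSet B := by
    have : B = (fun p : V 2 => |p 1|) ⁻¹' Iio 1 := rfl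
    rw [this]
    exact (continuous_abs.comp (EuclideanSpace.proj (1:Fin 2) : V 2 →L[ℝ] ℝ).continuous).measurable
      measurableSet_Iio
  have hae : ∀ᵐ p : V 2, p ∈ cross ℓ → dvg zfield p =
      A.indicator (fun _ => (1:ℝ)) p + B.indicator (fun _ => (1:ℝ)) p := by
    have hN := bad_null
    rw [← compl_mem_ae_iff] at hN
    filter_upwards [hN] with p hp _
    simp only [mem_compl_iff, mem_setOf_eq, not_or] at hp
    rw [dvg_zfield_off hp.1 hp.2]
    simp [Set.indicator_apply, hA, hB]
  rw [setIntegral_congr_ae (measurableSet_cross ℓ) hae]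
  have hres : ∀ {C : Set (V 2)}, MeasurableSet C →
      IntegrableOn (C.indicator (fun _ => (1:ℝ))) (cross ℓ) volume := by
    intro C hCm
    rw [IntegrableOn, integrable_indicator_iff hCm]
    refine integrableOn_const (ne_of_lt ?_)
    rw [Measure.restrict_apply hCm]
    exact lt_of_le_of_lt (measure_mono inter_subset_right) (cross_vol_fin hl)
  have hiA := hres hAm
  have hiB := hres hBm
  rw [integral_add hiA hiB, setIntegral_indicator hAm, setIntegral_indicator hBm,
    setIntegral_const, setIntegral_const, measureReal_def, measureReal_def, strip_vol0 hl, strip_vol1 hl]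
  have e2 : (ENNReal.ofReal 2).toReal = 2 := ENNReal.toReal_ofReal (by norm_num)
  have el : (ENNReal.ofReal (ℓ - -ℓ)).toReal = ℓ - -ℓ := ENNReal.toReal_ofReal (by linarith)
  rw [ENNReal.toReal_mul, ENNReal.toReal_mul, e2, el]
  simp only [smul_eq_mul, mul_one]
  ring

lemma univ_int {ℓ : ℝ} (z : V 2 → V 2) :
    ∫ x in (univ : Set (V 2)), (cross ℓ).indicator (1 : V 2 → ℝ) x * dvg z x
      = ∫ x in cross ℓ, dvg z x := by
  rw [Measure.restrict_univ]
  have h : ∀ x, (cross ℓ).indicator (1 : V 2 → ℝ) x * dvg z x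
      = (cross ℓ).indicator (fun x => dvg z x) x := by
    intro x
    by_cases hx : x ∈ cross ℓ <;> simp [Set.indicator_apply, hx]
  rw [integral_congr_ae (Filter.Eventually.of_forall h), integral_indicator (measurableSet_cross ℓ)]


end CC

/-- The calibration of the cross: (i) `z` takes values in the
unit ball `[−1,1]²` of `ψ°` on `E_L`; (ii) `div z = 1 + χ_{[−1,1]²}` in the
interior of each region; (iii) for `1 ≤ ℓ ≤ L`,
`P_φ(E_ℓ) = ∫_{∂E_ℓ} z·ν dH¹ (= ∫_{E_ℓ} div z dx)`. -/
theorem cross_calibration (L : ℝ) (hL : 1 < L) :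
    (∀ p ∈ cross L, |zfield p 0| ≤ 1 ∧ |zfield p 1| ≤ 1) ∧
    (∀ p : V 2,
      ((|p 0| < 1 ∧ |p 1| < 1) → dvg zfield p = 2) ∧
      ((|p 0| < 1 ∧ 1 < |p 1| ∧ |p 1| < L) → dvg zfield p = 1) ∧
      ((1 < |p 0| ∧ |p 0| < L ∧ |p 1| < 1) → dvg zfield p = 1)) ∧
    (∀ ℓ : ℝ, 1 ≤ ℓ → ℓ ≤ L →
      anisoPer phi1 univ (cross ℓ) = ∫ x in cross ℓ, dvg zfield x) := by
  refine ⟨?_, ?_, ?_⟩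
  · intro p _
    exact ⟨CC.abs_clamp_le (p 0), CC.abs_clamp_le (p 1)⟩
  · intro p
    refine ⟨?_, ?_, ?_⟩
    · rintro ⟨h0, h1⟩
      rw [CC.dvg_zfield_off (ne_of_lt h0) (ne_of_lt h1), if_pos h0, if_pos h1]
      norm_num
    · rintro ⟨h0, h1, _⟩
      rw [CC.dvg_zfield_off (ne_of_lt h0) (ne_of_gt h1), if_pos h0, if_neg (not_lt.2 h1.le)]
      norm_num
    · rintro ⟨h0, _, h1⟩
      rw [CC.dvg_zfield_off (ne_of_gt h0) (ne_of_lt h1), if_neg (not_lt.2 h0.le), if_pos h1]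
      norm_num
  · intro ℓ hl _
    have hub : ∀ r ∈ tvSet phi1 univ ((cross ℓ).indicator 1), r ≤ 8 * ℓ := by
      rintro r ⟨z, hz, _, _, hdual, rfl⟩
      rw [CC.univ_int z]
      exact CC.upper hl hz (CC.comp_bound hdual)
    have hmem : (8 * ℓ) ∈ tvSet phi1 univ ((cross ℓ).indicator 1) :=
      ⟨CC.zg ℓ, CC.zg_contDiff ℓ, CC.zg_supp ℓ, subset_univ _, CC.zg_dual ℓ,
        by rw [CC.univ_int (CC.zg ℓ)]; exact (CC.eval_zg hl).symm⟩
    have h1 : anisoPer phi1 univ (cross ℓ) = 8 * ℓ := by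
      rw [anisoPer, anisoTV]
      exact le_antisymm (csSup_le ⟨_, hmem⟩ hub) (le_csSup ⟨8 * ℓ, fun r hr => hub r hr⟩ hmem)
    rw [h1, CC.int_zfield hl]
end
end
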